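/- Let ξ be an ℝ^m-valued random vector with law P, let ε ∈ (0,1), let g = (g_j)_{j=1,…,l} with each g_j(x;·) : ℝ^m → ℝ measurable, b ∈ ℝ^l, and k ∈ ℝ^l with k_j > 0 for all j. Let x̂ ∈ ℝ^d satisfy the chance constraint P(g_j(x̂;ξ) ≤ b_j for all j) ≥ 1−ε, and let ρ = inf{t ∈ ℝ : P(max_j (g_j(x̂;ξ)−b_j)/k_j ≤ t) ≥ 1−ε}. Consider the reconstructed robust problem: minimize f(x) subject to 'g_j(x;z) ≤ b_j for all j, for every z ∈ ℝ^m with g_j(x̂;z) ≤ b_j + ρ k_j for all j'. Then ρ ≤ 0, x̂ is feasible for this robust problem, and any optimal solution x̃ of it satisfies both P(g_j(x̃;ξ) ≤ b_j for all j) ≥ 1−ε and f(x̃) ≤ f(x̂); i.e., reconstruction yields a chance-feasible solution with objective value at least as good as that of x̂. -/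

import Mathlib

open MeasureTheory

/-- monotonic objective improvement: if `x̂` satisfies the joint chance
constraint and `ρ` is the `(1-ε)`-quantile of `max_j (g_j(x̂;ξ)−b_j)/k_j`, then `ρ ≤ 0`,
`x̂` is feasible for the reconstructed robust problem, and any optimal solution `x̃` of it
is chance-feasible with `f(x̃) ≤ f(x̂)`. -/
theorem reconstruction_monotone_improvement
    {m d l : ℕ} (hl : 0 < l)
    {Ω : Type*} [MeasurableSpace Ω] (P : Measure Ω) [IsProbabilityMeasure P]
    (ξ : Ω → (Fin m → ℝ)) (hξ : Measurable ξ)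
    (ε : ℝ) (hε : ε ∈ Set.Ioo (0 : ℝ) 1)
    (g : (Fin d → ℝ) → (Fin m → ℝ) → Fin l → ℝ)
    (hg : ∀ (x : Fin d → ℝ) (j : Fin l), Measurable fun z => g x z j)
    (b k : Fin l → ℝ) (hk : ∀ j, 0 < k j)
    (f : (Fin d → ℝ) → ℝ)
    (xhat : Fin d → ℝ)
    (hxhat : ENNReal.ofReal (1 - ε) ≤ P {ω | ∀ j, g xhat (ξ ω) j ≤ b j})
    (ρ : ℝ)
    (hρ : ρ = sInf {t : ℝ | ENNReal.ofReal (1 - ε) ≤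
      P {ω | (⨆ j : Fin l, (g xhat (ξ ω) j - b j) / k j) ≤ t}}) :
    ρ ≤ 0 ∧
    (∀ z : Fin m → ℝ,
      (∀ j, g xhat z j ≤ b j + ρ * k j) → ∀ j, g xhat z j ≤ b j) ∧
    (∀ xtilde : Fin d → ℝ,
      ((∀ z : Fin m → ℝ,
          (∀ j, g xhat z j ≤ b j + ρ * k j) → ∀ j, g xtilde z j ≤ b j) ∧
        (∀ x : Fin d → ℝ,
          (∀ z : Fin m → ℝ,
            (∀ j, g xhat z j ≤ b j + ρ * k j) → ∀ j, g x z j ≤ b j) →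
          f xtilde ≤ f x)) →
      ENNReal.ofReal (1 - ε) ≤ P {ω | ∀ j, g xtilde (ξ ω) j ≤ b j} ∧
        f xtilde ≤ f xhat) := by
  have hne : Nonempty (Fin l) := ⟨⟨0, hl⟩⟩
  -- the sup-≤ characterization
  have hTle : ∀ z (t : ℝ),
      ((⨆ j : Fin l, (g xhat z j - b j) / k j) ≤ t) ↔
      (∀ j, g xhat z j ≤ b j + t * k j) := by
    intro z t
    rw [ciSup_le_iff (Set.Finite.bddAbove (Set.finite_range _))]
    constructor
    · intro h j
      have := h j
      rw [div_le_iff₀ (hk j)] at this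
      linarith
    · intro h j
      rw [div_le_iff₀ (hk j)]
      have := h j
      linarith
  set S : Set ℝ := {t : ℝ | ENNReal.ofReal (1 - ε) ≤
      P {ω | (⨆ j : Fin l, (g xhat (ξ ω) j - b j) / k j) ≤ t}} with hS
  -- S is upward closed
  have hup : ∀ t₁ t₂, t₁ ≤ t₂ → t₁ ∈ S → t₂ ∈ S := by
    intro t₁ t₂ h h1
    refine le_trans h1 (measure_mono fun ω hω => le_trans hω h)
  have h0S : (0 : ℝ) ∈ S := by
    refine le_trans hxhat (measure_mono fun ω hω => ?_)
    rw [Set.mem_setOf_eq, hTle]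
    intro j
    have := hω j
    simp only [zero_mul, add_zero]
    exact this
  have hρ0 : ρ ≤ 0 := by
    rw [hρ]
    by_cases hb : BddBelow S
    · exact csInf_le hb h0S
    · rw [Real.sInf_of_not_bddBelow hb]
  -- measurability of the level sets
  have hmeas : ∀ t : ℝ, MeasurableSet {ω | (⨆ j : Fin l, (g xhat (ξ ω) j - b j) / k j) ≤ t} := by
    intro t
    have : {ω | (⨆ j : Fin l, (g xhat (ξ ω) j - b j) / k j) ≤ t} =
        ⋂ j : Fin l, {ω | g xhat (ξ ω) j ≤ b j + t * k j} := by
      ext ω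
      simp only [Set.mem_setOf_eq, Set.mem_iInter, hTle]
    rw [this]
    exact MeasurableSet.iInter fun j =>
      measurableSet_le ((hg xhat j).comp hξ) measurable_const
  -- the quantile is attained: ρ ∈ S
  have hρS : ρ ∈ S := by
    by_cases hb : BddBelow S
    · have hSne : S.Nonempty := ⟨0, h0S⟩
      have hmem : ∀ n : ℕ, ρ + 1 / (n + 1) ∈ S := by
        intro n
        have hpos : (0 : ℝ) < 1 / (n + 1) := by positivity
        have hlt : sInf S < ρ + 1 / (n + 1) := by rw [← hρ]; linarith
        obtain ⟨s, hs, hslt⟩ := exists_lt_of_csInf_lt hSne hlt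
        exact hup s _ hslt.le hs
      have hiInter : {ω | (⨆ j : Fin l, (g xhat (ξ ω) j - b j) / k j) ≤ ρ} =
          ⋂ n : ℕ, {ω | (⨆ j : Fin l, (g xhat (ξ ω) j - b j) / k j) ≤ ρ + 1 / (n + 1)} := by
        ext ω
        simp only [Set.mem_setOf_eq, Set.mem_iInter]
        constructor
        · intro h n
          have : (0 : ℝ) < 1 / (n + 1) := by positivity
          linarith
        · intro h
          refine le_of_forall_pos_le_add fun δ hδ => ?_
          obtain ⟨n, hn⟩ := exists_nat_one_div_lt hδ
          have := h n
          linarith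
      have hanti : Antitone fun n : ℕ =>
          {ω | (⨆ j : Fin l, (g xhat (ξ ω) j - b j) / k j) ≤ ρ + 1 / (n + 1)} := by
        intro a c hac ω hω
        simp only [Set.mem_setOf_eq] at *
        have hac' : (a : ℝ) ≤ c := Nat.cast_le.mpr hac
        have : (1 : ℝ) / (c + 1) ≤ 1 / (a + 1) := by
          apply one_div_le_one_div_of_le (by positivity)
          linarith
        linarith
      have heq := Directed.measure_iInter
        (fun n : ℕ => (hmeas (ρ + 1 / (n + 1))).nullMeasurableSet)
        hanti.directed_ge ⟨0, measure_ne_top P _⟩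
      rw [Set.mem_setOf_eq, hiInter, heq]
      exact le_iInf fun n => hmem n
    · have : ρ = 0 := by rw [hρ]; exact Real.sInf_of_not_bddBelow hb
      rw [this]; exact h0S
  refine ⟨hρ0, ?_, ?_⟩
  · intro z hz j
    have := hz j
    have hk' : ρ * k j ≤ 0 := mul_nonpos_of_nonpos_of_nonneg hρ0 (hk j).le
    linarith
  · intro xtilde ⟨hfeas, hopt⟩
    constructor
    · refine le_trans hρS (measure_mono fun ω hω => ?_)
      rw [Set.mem_setOf_eq, hTle] at hω
      exact hfeas (ξ ω) hω
    · refine hopt xhat fun z hz j => ?_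
      have := hz j
      have hk' : ρ * k j ≤ 0 := mul_nonpos_of_nonpos_of_nonneg hρ0 (hk j).le
      linarith
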